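/- Let M > 0 and let f₁ : ℝ → ℝ be a continuous nonnegative function vanishing outside [0, M]. Let h and ρ be continuously differentiable functions on [0, M] with h strictly increasing, and suppose there exists x_β ∈ (0, M) with h(x_β) = 0 and h'(x_β) > 0 (so x_β is the unique zero of h in [0, M]). Let F_Z : [0, ∞) → ℝ be continuously differentiable, nondecreasing, with derivative f_Z and F_Z(0) = c. For t ∈ ℝ define U(t) = ∫₀^M (x − h(x) − t·ρ(x)) · F_Z(h(x) + t·ρ(x)) · 1{h(x) + t·ρ(x) > 0} · f₁(x) dx. Then U is differentiable at t = 0 and U'(0) = ∫_{x_β}^M ρ(x)·[(x − h(x))·f_Z(h(x)) − F_Z(h(x))]·f₁(x) dx + (ρ(x_β)/h'(x_β)) · c · f₁(x_β) · x_β. -/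

import Mathlib

open MeasureTheory intervalIntegral Set Filter Topology

lemma ext_cdf_hasDerivAt (F_Z f_Z : ℝ → ℝ) (c : ℝ)
    (hFZ : ∀ z ∈ Set.Ici (0:ℝ), HasDerivWithinAt F_Z (f_Z z) (Set.Ici 0) z)
    (hFZ0 : F_Z 0 = c) (y : ℝ) :
    HasDerivAt (fun y => if 0 ≤ y then F_Z y else c + f_Z 0 * y) (f_Z (max y 0)) y := by
  rcases lt_trichotomy y 0 with hy | rfl | hy
  · have hmax : max y 0 = 0 := max_eq_right hy.le
    rw [hmax]
    have hlin : HasDerivAt (fun y : ℝ => c + f_Z 0 * y) (f_Z 0) y := by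
      simpa using ((hasDerivAt_id y).const_mul (f_Z 0)).const_add c
    apply hlin.congr_of_eventuallyEq
    filter_upwards [Iio_mem_nhds hy] with z hz
    simp [not_le.2 (Set.mem_Iio.1 hz)]
  · have h₁ : HasDerivWithinAt (fun y : ℝ => if 0 ≤ y then F_Z y else c + f_Z 0 * y)
        (f_Z 0) (Set.Ici 0) 0 := by
      apply (hFZ 0 Set.self_mem_Ici).congr (fun z hz => by simp [Set.mem_Ici.1 hz]) (by simp)
    have h₂ : HasDerivWithinAt (fun y : ℝ => if 0 ≤ y then F_Z y else c + f_Z 0 * y)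
        (f_Z 0) (Set.Iic 0) 0 := by
      have hlin : HasDerivWithinAt (fun y : ℝ => c + f_Z 0 * y) (f_Z 0) (Set.Iic 0) 0 := by
        simpa using (((hasDerivAt_id (0:ℝ)).const_mul (f_Z 0)).const_add c).hasDerivWithinAt
      apply hlin.congr
      · intro z hz
        rcases eq_or_lt_of_le (Set.mem_Iic.1 hz) with rfl | hz'
        · simp [hFZ0]
        · simp [not_le.2 hz']
      · simp [hFZ0]
    have := h₂.union h₁
    rw [Set.Iic_union_Ici] at this
    simpa [hasDerivWithinAt_univ] using this
  · have hmax : max y 0 = y := max_eq_left hy.le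
    rw [hmax]
    have hF : HasDerivAt F_Z (f_Z y) y :=
      (hFZ y hy.le).hasDerivAt (Ici_mem_nhds hy)
    apply hF.congr_of_eventuallyEq
    filter_upwards [Ioi_mem_nhds hy] with z hz
    simp [le_of_lt (Set.mem_Ioi.1 hz)]

set_option maxHeartbeats 2000000 in
/-- Directional derivative of a strategic bidder's expected utility in the Myerson
auction when the virtualized-bid function `h` is perturbed to `h + t·ρ`: with value
density `f₁` supported in `[0,M]`, competition cdf `F_Z` (with density `f_Z` and
`F_Z(0) = c`), and reserve value `x_β ∈ (0,M)` (the zero of `h`, with `h'(x_β) > 0`),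
the utility `U(t) = ∫₀^M (x - h(x) - tρ(x)) F_Z(h(x)+tρ(x)) 1{h(x)+tρ(x)>0} f₁(x) dx`
is differentiable at `t = 0` with
`U'(0) = ∫_{x_β}^M ρ(x)[(x - h(x)) f_Z(h(x)) - F_Z(h(x))] f₁(x) dx
        + (ρ(x_β)/h'(x_β))·c·f₁(x_β)·x_β`. -/
theorem myerson_utility_directional_derivative
    (M : ℝ) (hM : 0 < M)
    (f₁ : ℝ → ℝ) (hf₁cont : Continuous f₁) (hf₁pos : ∀ x, 0 ≤ f₁ x)
    (hf₁supp : ∀ x, x ∉ Set.Icc 0 M → f₁ x = 0)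
    (h ρ h' ρ' : ℝ → ℝ)
    (hh : ∀ x ∈ Set.Icc 0 M, HasDerivWithinAt h (h' x) (Set.Icc 0 M) x)
    (hh'cont : ContinuousOn h' (Set.Icc 0 M))
    (hρ : ∀ x ∈ Set.Icc 0 M, HasDerivWithinAt ρ (ρ' x) (Set.Icc 0 M) x)
    (hρ'cont : ContinuousOn ρ' (Set.Icc 0 M))
    (hhmono : StrictMonoOn h (Set.Icc 0 M))
    (xβ : ℝ) (hxβ : xβ ∈ Set.Ioo 0 M) (hhxβ : h xβ = 0) (hh'xβ : 0 < h' xβ)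
    (F_Z f_Z : ℝ → ℝ) (c : ℝ)
    (hFZ : ∀ z ∈ Set.Ici (0 : ℝ), HasDerivWithinAt F_Z (f_Z z) (Set.Ici 0) z)
    (hfZcont : ContinuousOn f_Z (Set.Ici 0))
    (hFZmono : MonotoneOn F_Z (Set.Ici 0))
    (hFZ0 : F_Z 0 = c)
    (U : ℝ → ℝ)
    (hU : ∀ t, U t = ∫ x in (0 : ℝ)..M,
      (if 0 < h x + t * ρ x
        then (x - h x - t * ρ x) * F_Z (h x + t * ρ x) * f₁ x
        else 0)) :
    HasDerivAt U
      ((∫ x in xβ..M, ρ x * ((x - h x) * f_Z (h x) - F_Z (h x)) * f₁ x)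
        + (ρ xβ / h' xβ) * c * f₁ xβ * xβ) 0 := by
  obtain ⟨hxβ0, hxβM⟩ := hxβ
  have hxβIcc : xβ ∈ Set.Icc 0 M := ⟨hxβ0.le, hxβM.le⟩
  have hIccnhds : Set.Icc 0 M ∈ 𝓝 xβ := Icc_mem_nhds hxβ0 hxβM
  have hcont_h : ContinuousOn h (Set.Icc 0 M) := fun x hx => (hh x hx).continuousWithinAt
  have hcont_ρ : ContinuousOn ρ (Set.Icc 0 M) := fun x hx => (hρ x hx).continuousWithinAt
  set Fh : ℝ → ℝ := fun y => if 0 ≤ y then F_Z y else c + f_Z 0 * y with hFh_def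
  set fh : ℝ → ℝ := fun y => f_Z (max y 0) with hfh_def
  have hFhd : ∀ y, HasDerivAt Fh (fh y) y := ext_cdf_hasDerivAt F_Z f_Z c hFZ hFZ0
  have hFhcont : Continuous Fh := continuous_iff_continuousAt.2 fun y => (hFhd y).continuousAt
  have hfhcont : Continuous fh := by
    exact hfZcont.comp_continuous (continuous_id.max continuous_const)
      (fun x => Set.mem_Ici.2 (le_max_right _ _))
  set g : ℝ → ℝ → ℝ := fun t x => (x - h x - t * ρ x) * Fh (h x + t * ρ x) * f₁ x with hg_def
  set g' : ℝ → ℝ → ℝ := fun t x =>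
    (-(ρ x) * Fh (h x + t * ρ x) + (x - h x - t * ρ x) * (fh (h x + t * ρ x) * ρ x)) * f₁ x
    with hg'_def
  -- joint continuity
  have hh2 : ContinuousOn (fun p : ℝ × ℝ => h p.2) (Set.univ ×ˢ Set.Icc 0 M) :=
    hcont_h.comp continuous_snd.continuousOn (fun p hp => hp.2)
  have hρ2 : ContinuousOn (fun p : ℝ × ℝ => ρ p.2) (Set.univ ×ˢ Set.Icc 0 M) :=
    hcont_ρ.comp continuous_snd.continuousOn (fun p hp => hp.2)
  have hlin2 : ContinuousOn (fun p : ℝ × ℝ => p.2 - h p.2 - p.1 * ρ p.2)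
      (Set.univ ×ˢ Set.Icc 0 M) :=
    (continuous_snd.continuousOn.sub hh2).sub (continuous_fst.continuousOn.mul hρ2)
  have harg2 : ContinuousOn (fun p : ℝ × ℝ => h p.2 + p.1 * ρ p.2)
      (Set.univ ×ˢ Set.Icc 0 M) :=
    hh2.add (continuous_fst.continuousOn.mul hρ2)
  have hf₁2 : ContinuousOn (fun p : ℝ × ℝ => f₁ p.2) (Set.univ ×ˢ Set.Icc 0 M) :=
    (hf₁cont.comp continuous_snd).continuousOn
  have hgcont : ContinuousOn (fun p : ℝ × ℝ => g p.1 p.2) (Set.univ ×ˢ Set.Icc 0 M) :=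
    (hlin2.mul (hFhcont.comp_continuousOn harg2)).mul hf₁2
  have hg'cont : ContinuousOn (fun p : ℝ × ℝ => g' p.1 p.2) (Set.univ ×ˢ Set.Icc 0 M) :=
    ((hρ2.neg.mul (hFhcont.comp_continuousOn harg2)).add
      (hlin2.mul ((hfhcont.comp_continuousOn harg2).mul hρ2))).mul hf₁2
  have hgtcont : ∀ t, ContinuousOn (fun x => g t x) (Set.Icc 0 M) := by
    intro t
    exact hgcont.comp ((continuous_const.prodMk continuous_id).continuousOn)
      (fun x hx => ⟨Set.mem_univ _, hx⟩)
  -- bounds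
  obtain ⟨B, hBpos, hB⟩ : ∃ B > 0, ∀ x ∈ Set.Icc 0 M, |ρ x| ≤ B := by
    obtain ⟨B, hB⟩ := isCompact_Icc.exists_bound_of_continuousOn hcont_ρ
    exact ⟨max B 1, lt_of_lt_of_le one_pos (le_max_right _ _),
      fun x hx => (hB x hx).trans (le_max_left _ _)⟩
  obtain ⟨B', hB'pos, hB'⟩ : ∃ B' > 0, ∀ x ∈ Set.Icc 0 M, |ρ' x| ≤ B' := by
    obtain ⟨B, hB⟩ := isCompact_Icc.exists_bound_of_continuousOn hρ'cont
    exact ⟨max B 1, lt_of_lt_of_le one_pos (le_max_right _ _),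
      fun x hx => (hB x hx).trans (le_max_left _ _)⟩
  -- δ
  obtain ⟨δ, hδpos, hδ⟩ : ∃ δ > 0,
      Set.Icc (xβ - δ) (xβ + δ) ⊆ Set.Ioo 0 M ∩ {x | h' xβ / 2 < h' x} := by
    have hmem : Set.Ioo 0 M ∩ {x | h' xβ / 2 < h' x} ∈ 𝓝 xβ := by
      refine Filter.inter_mem (Ioo_mem_nhds hxβ0 hxβM) ?_
      have hc : ContinuousAt h' xβ := (hh'cont xβ hxβIcc).continuousAt hIccnhds
      have := hc.preimage_mem_nhds (Ioi_mem_nhds (show h' xβ / 2 < h' xβ by linarith))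
      exact this
    obtain ⟨ε, hε, hball⟩ := Metric.mem_nhds_iff.1 hmem
    refine ⟨ε/2, by positivity, fun x hx => hball ?_⟩
    rw [Metric.mem_ball, Real.dist_eq, abs_lt]
    obtain ⟨h1, h2⟩ := hx
    constructor <;> linarith
  have hδIoo : Set.Icc (xβ - δ) (xβ + δ) ⊆ Set.Ioo 0 M := fun x hx => (hδ hx).1
  have hIsub : Set.Icc (xβ - δ) (xβ + δ) ⊆ Set.Icc 0 M :=
    fun x hx => Set.Ioo_subset_Icc_self (hδIoo hx)
  have hδm : ∀ x ∈ Set.Icc (xβ - δ) (xβ + δ), h' xβ / 2 < h' x := fun x hx => (hδ hx).2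
  have hδlo : 0 < xβ - δ := (hδIoo ⟨le_refl _, by linarith⟩).1
  have hδhi : xβ + δ < M := (hδIoo ⟨by linarith, le_refl _⟩).2
  have hxβmem : xβ ∈ Set.Icc (xβ - δ) (xβ + δ) := ⟨by linarith, by linarith⟩
  have ha₁ : h (xβ - δ) < 0 := by
    rw [← hhxβ]
    exact hhmono (hIsub ⟨le_refl _, by linarith⟩) hxβIcc (by linarith)
  have ha₂ : 0 < h (xβ + δ) := by
    rw [← hhxβ]
    exact hhmono hxβIcc (hIsub ⟨by linarith, le_refl _⟩) (by linarith)
  set t₀ : ℝ := min (min (-h (xβ - δ) / B) (h (xβ + δ) / B)) (h' xβ / 2 / B') with ht₀_def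
  have ht₀pos : 0 < t₀ := by
    exact lt_min (lt_min (div_pos (by linarith) hBpos) (div_pos ha₂ hBpos)) (div_pos (by linarith) hB'pos)
  -- region facts
  have hreg₁ : ∀ t : ℝ, |t| < t₀ → ∀ x ∈ Set.Icc 0 (xβ - δ), h x + t * ρ x < 0 := by
    intro t ht x hx
    have hxM : x ∈ Set.Icc 0 M := ⟨hx.1, by linarith [hx.2]⟩
    have h1 : h x ≤ h (xβ - δ) :=
      hhmono.monotoneOn hxM (hIsub ⟨le_refl _, by linarith⟩) hx.2
    have h2 : |t * ρ x| ≤ |t| * B := by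
      rw [abs_mul]; exact mul_le_mul_of_nonneg_left (hB x hxM) (abs_nonneg t)
    have h3 : |t| * B < -h (xβ - δ) := by
      have htlt : |t| < -h (xβ - δ) / B :=
        lt_of_lt_of_le ht (le_trans (min_le_left _ _) (min_le_left _ _))
      calc |t| * B < (-h (xβ - δ) / B) * B := mul_lt_mul_of_pos_right htlt hBpos
        _ = -h (xβ - δ) := by field_simp
    have h4 : t * ρ x ≤ |t * ρ x| := le_abs_self _
    linarith
  have hreg₂ : ∀ t : ℝ, |t| < t₀ → ∀ x ∈ Set.Icc (xβ + δ) M, 0 < h x + t * ρ x := by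
    intro t ht x hx
    have hxM : x ∈ Set.Icc 0 M := ⟨by linarith [hx.1], hx.2⟩
    have h1 : h (xβ + δ) ≤ h x :=
      hhmono.monotoneOn (hIsub ⟨by linarith, le_refl _⟩) hxM hx.1
    have h2 : |t * ρ x| ≤ |t| * B := by
      rw [abs_mul]; exact mul_le_mul_of_nonneg_left (hB x hxM) (abs_nonneg t)
    have h3 : |t| * B < h (xβ + δ) := by
      have htlt : |t| < h (xβ + δ) / B :=
        lt_of_lt_of_le ht (le_trans (min_le_left _ _) (min_le_right _ _))
      calc |t| * B < (h (xβ + δ) / B) * B := mul_lt_mul_of_pos_right htlt hBpos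
        _ = h (xβ + δ) := by field_simp
    have h4 : -(t * ρ x) ≤ |t * ρ x| := neg_le_abs _
    linarith
  have hsm : ∀ t : ℝ, |t| < t₀ →
      StrictMonoOn (fun x => h x + t * ρ x) (Set.Icc (xβ - δ) (xβ + δ)) := by
    intro t ht
    have hψd : ∀ x ∈ Set.Ioo (xβ - δ) (xβ + δ),
        HasDerivAt (fun x => h x + t * ρ x) (h' x + t * ρ' x) x := by
      intro x hx
      have hxIoo : x ∈ Set.Ioo 0 M := hδIoo (Set.Ioo_subset_Icc_self hx)
      have hn : Set.Icc 0 M ∈ 𝓝 x := Icc_mem_nhds hxIoo.1 hxIoo.2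
      have h1 := (hh x (Set.Ioo_subset_Icc_self hxIoo)).hasDerivAt hn
      have h2 := ((hρ x (Set.Ioo_subset_Icc_self hxIoo)).hasDerivAt hn).const_mul t
      exact h1.add h2
    apply strictMonoOn_of_deriv_pos (convex_Icc _ _)
    · exact (hcont_h.add (continuousOn_const.mul hcont_ρ)).mono hIsub
    · intro x hx
      rw [interior_Icc] at hx
      rw [(hψd x hx).deriv]
      have hxI := hδm x (Set.Ioo_subset_Icc_self hx)
      have hxM : x ∈ Set.Icc 0 M := hIsub (Set.Ioo_subset_Icc_self hx)
      have h2 : |t * ρ' x| ≤ |t| * B' := by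
        rw [abs_mul]; exact mul_le_mul_of_nonneg_left (hB' x hxM) (abs_nonneg t)
      have h3 : |t| * B' < h' xβ / 2 := by
        have htlt : |t| < h' xβ / 2 / B' := lt_of_lt_of_le ht (min_le_right _ _)
        calc |t| * B' < (h' xβ / 2 / B') * B' := mul_lt_mul_of_pos_right htlt hB'pos
          _ = h' xβ / 2 := by field_simp
      have h4 : -(t * ρ' x) ≤ |t * ρ' x| := neg_le_abs _
      linarith
  set χ : ℝ → ℝ := fun t =>
    sInf {x ∈ Set.Icc (xβ - δ) (xβ + δ) | 0 ≤ h x + t * ρ x} with hχ_def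
  have hroot : ∀ t : ℝ, |t| < t₀ → χ t ∈ Set.Icc (xβ - δ) (xβ + δ) ∧
      h (χ t) + t * ρ (χ t) = 0 ∧
      ∀ x ∈ Set.Icc 0 M, (0 < h x + t * ρ x ↔ χ t < x) := by
    intro t ht
    have hψcont : ContinuousOn (fun x => h x + t * ρ x) (Set.Icc (xβ - δ) (xβ + δ)) :=
      (hcont_h.add (continuousOn_const.mul hcont_ρ)).mono hIsub
    have hlo : h (xβ - δ) + t * ρ (xβ - δ) < 0 := hreg₁ t ht _ ⟨by linarith, le_refl _⟩
    have hhi : 0 < h (xβ + δ) + t * ρ (xβ + δ) := hreg₂ t ht _ ⟨le_refl _, by linarith⟩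
    obtain ⟨z, hzI, hz⟩ : ∃ z ∈ Set.Icc (xβ - δ) (xβ + δ), h z + t * ρ z = 0 := by
      have him := intermediate_value_Icc (show xβ - δ ≤ xβ + δ by linarith) hψcont
      obtain ⟨z, hz1, hz2⟩ := him ⟨hlo.le, hhi.le⟩
      exact ⟨z, hz1, hz2⟩
    have hS : {x ∈ Set.Icc (xβ - δ) (xβ + δ) | 0 ≤ h x + t * ρ x} = Set.Icc z (xβ + δ) := by
      ext x
      simp only [Set.mem_setOf_eq, Set.mem_Icc]
      constructor
      · rintro ⟨hxI, hxψ⟩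
        refine ⟨?_, hxI.2⟩
        by_contra hc
        push_neg at hc
        have hlt := hsm t ht ⟨hxI.1, hxI.2⟩ hzI hc
        simp only [] at hlt
        rw [hz] at hlt
        linarith
      · rintro ⟨hzx, hxhi⟩
        have hxI : x ∈ Set.Icc (xβ - δ) (xβ + δ) := ⟨le_trans hzI.1 hzx, hxhi⟩
        refine ⟨⟨hxI.1, hxI.2⟩, ?_⟩
        rcases eq_or_lt_of_le hzx with rfl | hlt
        · rw [hz]
        · have hlt2 := hsm t ht hzI hxI hlt
          simp only [] at hlt2
          rw [hz] at hlt2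
          linarith
    have hχt : χ t = z := by
      have : χ t = sInf {x ∈ Set.Icc (xβ - δ) (xβ + δ) | 0 ≤ h x + t * ρ x} := rfl
      rw [this, hS]
      exact csInf_Icc hzI.2
    refine ⟨hχt ▸ hzI, hχt ▸ hz, ?_⟩
    intro x hx
    rw [hχt]
    rcases lt_or_ge x (xβ - δ) with hx1 | hx1
    · constructor
      · intro hpos
        exact absurd (hreg₁ t ht x ⟨hx.1, hx1.le⟩) (by linarith)
      · intro hzx
        exact absurd hzx (by linarith [hzI.1])
    · rcases le_or_gt x (xβ + δ) with hx2 | hx2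
      · have hxI : x ∈ Set.Icc (xβ - δ) (xβ + δ) := ⟨hx1, hx2⟩
        have hiff := (hsm t ht).lt_iff_lt hzI hxI
        rw [hz] at hiff
        exact hiff
      · have hpos := hreg₂ t ht x ⟨hx2.le, hx.2⟩
        exact ⟨fun _ => lt_of_le_of_lt hzI.2 hx2, fun _ => hpos⟩
  have hχ0 : χ 0 = xβ := by
    obtain ⟨hI, heq, -⟩ := hroot 0 (by simpa using ht₀pos)
    have : h (χ 0) = 0 := by simpa using heq
    exact hhmono.injOn (hIsub hI) hxβIcc (by rw [this, hhxβ])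
  have hMVT : ∀ t : ℝ, |t| < t₀ → ∃ ξ ∈ Set.Icc (xβ - δ) (xβ + δ),
      |ξ - xβ| ≤ |χ t - xβ| ∧ h (χ t) - h xβ = h' ξ * (χ t - xβ) := by
    intro t ht
    obtain ⟨hχI, hχeq, -⟩ := hroot t ht
    rcases lt_trichotomy (χ t) xβ with hlt | heq | hgt
    · have hsub : Set.Icc (χ t) xβ ⊆ Set.Icc 0 M := Set.Icc_subset_Icc (hIsub hχI).1 hxβIcc.2
      have hcont : ContinuousOn h (Set.Icc (χ t) xβ) := hcont_h.mono hsub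
      have hderiv : ∀ x ∈ Set.Ioo (χ t) xβ, HasDerivAt h (h' x) x := by
        intro x hx
        have hxI : x ∈ Set.Ioo 0 M :=
          ⟨lt_of_lt_of_le (hδIoo hχI).1 hx.1.le, lt_trans hx.2 hxβM⟩
        exact (hh x ⟨hxI.1.le, hxI.2.le⟩).hasDerivAt (Icc_mem_nhds hxI.1 hxI.2)
      obtain ⟨ξ, hξ, hslope⟩ := exists_hasDerivAt_eq_slope h h' hlt hcont hderiv
      refine ⟨ξ, ⟨le_trans hχI.1 hξ.1.le, le_trans hξ.2.le (by linarith [hxβmem.2])⟩, ?_, ?_⟩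
      · rw [abs_of_nonpos (by linarith [hξ.2.le] : ξ - xβ ≤ 0),
          abs_of_nonpos (by linarith : χ t - xβ ≤ 0)]
        linarith [hξ.1]
      · have h2 : h' ξ * (xβ - χ t) = h xβ - h (χ t) := by
          rw [hslope, div_mul_cancel₀ _ (ne_of_gt (by linarith : (0:ℝ) < xβ - χ t))]
        linear_combination h2
    · exact ⟨xβ, hxβmem, by simp [heq], by rw [heq]; ring⟩
    · have hsub : Set.Icc xβ (χ t) ⊆ Set.Icc 0 M := Set.Icc_subset_Icc hxβIcc.1 (hIsub hχI).2
      have hcont : ContinuousOn h (Set.Icc xβ (χ t)) := hcont_h.mono hsub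
      have hderiv : ∀ x ∈ Set.Ioo xβ (χ t), HasDerivAt h (h' x) x := by
        intro x hx
        have hxI : x ∈ Set.Ioo 0 M :=
          ⟨lt_trans hxβ0 hx.1, lt_of_le_of_lt hx.2.le (hδIoo hχI).2⟩
        exact (hh x ⟨hxI.1.le, hxI.2.le⟩).hasDerivAt (Icc_mem_nhds hxI.1 hxI.2)
      obtain ⟨ξ, hξ, hslope⟩ := exists_hasDerivAt_eq_slope h h' hgt hcont hderiv
      refine ⟨ξ, ⟨le_trans (by linarith [hxβmem.1] : xβ - δ ≤ xβ) hξ.1.le,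
        le_trans hξ.2.le hχI.2⟩, ?_, ?_⟩
      · rw [abs_of_nonneg (by linarith [hξ.1.le] : (0:ℝ) ≤ ξ - xβ),
          abs_of_nonneg (by linarith : (0:ℝ) ≤ χ t - xβ)]
        linarith [hξ.2]
      · have h2 : h' ξ * (χ t - xβ) = h (χ t) - h xβ := by
          rw [hslope, div_mul_cancel₀ _ (ne_of_gt (by linarith : (0:ℝ) < χ t - xβ))]
        linear_combination -h2
  have hχbound : ∀ t : ℝ, |t| < t₀ → |χ t - xβ| ≤ |t| * (2 * B / h' xβ) := by
    intro t ht
    obtain ⟨hχI, hχeq, -⟩ := hroot t ht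
    obtain ⟨ξ, hξI, -, hMV⟩ := hMVT t ht
    have h1 : h' ξ * (χ t - xβ) = -(t * ρ (χ t)) := by
      rw [← hMV, hhxβ]; linarith
    have hξpos : h' xβ / 2 < h' ξ := hδm ξ hξI
    have h2 : |h' ξ| * |χ t - xβ| = |t| * |ρ (χ t)| := by
      rw [← abs_mul, h1, abs_neg, abs_mul]
    have h3 : |ρ (χ t)| ≤ B := hB _ (hIsub hχI)
    have h4 : h' xβ / 2 * |χ t - xβ| ≤ |t| * B := by
      calc h' xβ / 2 * |χ t - xβ| ≤ |h' ξ| * |χ t - xβ| := by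
            apply mul_le_mul_of_nonneg_right _ (abs_nonneg _)
            rw [abs_of_pos (by linarith)]
            linarith
        _ = |t| * |ρ (χ t)| := h2
        _ ≤ |t| * B := mul_le_mul_of_nonneg_left h3 (abs_nonneg t)
    have h5 : |t| * (2 * B / h' xβ) = |t| * B / (h' xβ / 2) := by
      field_simp
    rw [h5, le_div_iff₀ (by linarith)]
    linarith
  have hχtendsto : Tendsto χ (𝓝 0) (𝓝 xβ) := by
    have habs : Tendsto (fun t => |χ t - xβ|) (𝓝 0) (𝓝 0) := by
      have hbnd : ∀ᶠ t in 𝓝 (0:ℝ), |χ t - xβ| ≤ |t| * (2 * B / h' xβ) := by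
        filter_upwards [Metric.ball_mem_nhds (0:ℝ) ht₀pos] with t ht
        rw [Metric.mem_ball, Real.dist_eq, sub_zero] at ht
        exact hχbound t ht
      have hg0 : Tendsto (fun t : ℝ => |t| * (2 * B / h' xβ)) (𝓝 0) (𝓝 0) := by
        have hcc : Continuous fun t : ℝ => |t| * (2 * B / h' xβ) :=
          continuous_abs.mul continuous_const
        simpa using hcc.tendsto 0
      exact squeeze_zero' (Filter.Eventually.of_forall fun t => abs_nonneg _) hbnd hg0
    rw [tendsto_iff_dist_tendsto_zero]
    simpa [Real.dist_eq] using habs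
  choose! ξf hξfI hξfnear hξfeq using hMVT
  have hξftendsto : Tendsto ξf (𝓝 0) (𝓝 xβ) := by
    have habs : Tendsto (fun t => |ξf t - xβ|) (𝓝 0) (𝓝 0) := by
      have hbnd : ∀ᶠ t in 𝓝 (0:ℝ), |ξf t - xβ| ≤ |t| * (2 * B / h' xβ) := by
        filter_upwards [Metric.ball_mem_nhds (0:ℝ) ht₀pos] with t ht
        rw [Metric.mem_ball, Real.dist_eq, sub_zero] at ht
        exact le_trans (hξfnear t ht) (hχbound t ht)
      have hg0 : Tendsto (fun t : ℝ => |t| * (2 * B / h' xβ)) (𝓝 0) (𝓝 0) := by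
        have hcc : Continuous fun t : ℝ => |t| * (2 * B / h' xβ) :=
          continuous_abs.mul continuous_const
        simpa using hcc.tendsto 0
      exact squeeze_zero' (Filter.Eventually.of_forall fun t => abs_nonneg _) hbnd hg0
    rw [tendsto_iff_dist_tendsto_zero]
    simpa [Real.dist_eq] using habs
  have hχd : HasDerivAt χ (-(ρ xβ / h' xβ)) 0 := by
    have hρcA : ContinuousAt ρ xβ := (hcont_ρ xβ hxβIcc).continuousAt hIccnhds
    have hh'cA : ContinuousAt h' xβ := (hh'cont xβ hxβIcc).continuousAt hIccnhds
    have hlim : Tendsto (fun t => -ρ (χ t) / h' (ξf t)) (𝓝 0) (𝓝 (-ρ xβ / h' xβ)) :=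
      Tendsto.div ((hρcA.tendsto.comp hχtendsto).neg) (hh'cA.tendsto.comp hξftendsto)
        (ne_of_gt hh'xβ)
    rw [hasDerivAt_iff_tendsto_slope, show -(ρ xβ / h' xβ) = -ρ xβ / h' xβ by ring]
    apply (hlim.mono_left nhdsWithin_le_nhds).congr'
    filter_upwards [mem_nhdsWithin_of_mem_nhds (Metric.ball_mem_nhds (0:ℝ) ht₀pos),
      self_mem_nhdsWithin] with t ht hne
    rw [Metric.mem_ball, Real.dist_eq, sub_zero] at ht
    have htne : t ≠ 0 := hne
    obtain ⟨hχI, hχeq, -⟩ := hroot t ht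
    have hkey : h' (ξf t) * (χ t - xβ) = -(t * ρ (χ t)) := by
      have he := hξfeq t ht
      rw [hhxβ] at he
      linarith [he, hχeq]
    have hdne : h' (ξf t) ≠ 0 := ne_of_gt (lt_trans (by linarith) (hδm _ (hξfI t ht)))
    rw [slope_def_field, hχ0]
    field_simp
    linear_combination -hkey
  -- T1
  have hg'tcont : ∀ t, ContinuousOn (fun x => g' t x) (Set.Icc 0 M) := by
    intro t
    exact hg'cont.comp ((continuous_const.prodMk continuous_id).continuousOn)
      (fun x hx => ⟨Set.mem_univ _, hx⟩)
  have hgd : ∀ x ∈ Set.Icc 0 M, ∀ t : ℝ, HasDerivAt (fun t => g t x) (g' t x) t := by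
    intro x hx t
    have h1 : HasDerivAt (fun t : ℝ => x - h x - t * ρ x) (-(ρ x)) t :=
      (hasDerivAt_mul_const (ρ x)).const_sub (x - h x)
    have hu : HasDerivAt (fun t : ℝ => h x + t * ρ x) (ρ x) t :=
      (hasDerivAt_mul_const (ρ x)).const_add (h x)
    have h2 : HasDerivAt (fun t : ℝ => Fh (h x + t * ρ x)) (fh (h x + t * ρ x) * ρ x) t := by
      have := (hFhd (h x + t * ρ x)).comp t hu
      exact this
    have := (h1.mul h2).mul_const (f₁ x)
    simpa [hg_def, hg'_def, mul_comm, mul_left_comm, mul_assoc] using this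
  have hIsub2 : Set.uIcc xβ M ⊆ Set.Icc 0 M := Set.uIcc_subset_Icc hxβIcc ⟨hM.le, le_rfl⟩
  have hIocsub : Set.uIoc xβ M ⊆ Set.Icc 0 M :=
    le_trans Set.uIoc_subset_uIcc hIsub2
  have hT1 : HasDerivAt (fun t => ∫ x in xβ..M, g t x) (∫ x in xβ..M, g' 0 x) 0 := by
    obtain ⟨C₁, hC₁⟩ := (isCompact_Icc.prod isCompact_Icc :
        IsCompact (Set.Icc (-1:ℝ) 1 ×ˢ Set.Icc 0 M)).exists_bound_of_continuousOn
      (hg'cont.mono (fun p hp => ⟨Set.mem_univ _, hp.2⟩))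
    have hmain := intervalIntegral.hasDerivAt_integral_of_dominated_loc_of_deriv_le
      (F := g) (F' := g') (bound := fun _ => C₁) (a := xβ) (b := M) (x₀ := (0:ℝ)) (μ := volume)
      (Metric.ball_mem_nhds _ one_pos)
      (Filter.Eventually.of_forall fun t =>
        (((hgtcont t).mono hIocsub)).aestronglyMeasurable measurableSet_uIoc)
      (((hgtcont 0).mono hIsub2).intervalIntegrable)
      (((hg'tcont 0).mono hIocsub).aestronglyMeasurable measurableSet_uIoc)
      (Filter.Eventually.of_forall fun x hx t htb => by
        have ht1 : |t| < 1 := by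
          rw [Metric.mem_ball, Real.dist_eq, sub_zero] at htb; exact htb
        exact hC₁ (t, x) ⟨⟨by linarith [neg_abs_le t], by linarith [le_abs_self t]⟩, hIocsub hx⟩)
      intervalIntegrable_const
      (Filter.Eventually.of_forall fun x hx t _ => hgd x (hIocsub hx) t)
    exact hmain.2
  have hg'0 : ∫ x in xβ..M, g' 0 x
      = ∫ x in xβ..M, ρ x * ((x - h x) * f_Z (h x) - F_Z (h x)) * f₁ x := by
    apply intervalIntegral.integral_congr
    intro x hx
    rw [Set.uIcc_of_le hxβM.le] at hx
    have hxM : x ∈ Set.Icc 0 M := ⟨le_trans hxβ0.le hx.1, hx.2⟩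
    have hhx : 0 ≤ h x := by
      rw [← hhxβ]
      exact hhmono.monotoneOn hxβIcc hxM hx.1
    show (-ρ x * Fh (h x + 0 * ρ x) + (x - h x - 0 * ρ x) * (fh (h x + 0 * ρ x) * ρ x)) * f₁ x
      = ρ x * ((x - h x) * f_Z (h x) - F_Z (h x)) * f₁ x
    rw [zero_mul, add_zero, sub_zero,
      show Fh (h x) = F_Z (h x) from if_pos hhx,
      show fh (h x) = f_Z (h x) from by rw [hfh_def]; simp only []; rw [max_eq_left hhx]]
    ring
  -- T2
  have hg0 : g 0 xβ = xβ * c * f₁ xβ := by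
    simp [hg_def, hhxβ, hFh_def, hFZ0]
  have hT2 : HasDerivAt (fun t => ∫ x in xβ..χ t, g t x)
      (g 0 xβ * -(ρ xβ / h' xβ)) 0 := by
    have hA : HasDerivAt (fun t => g 0 xβ * (χ t - xβ)) (g 0 xβ * -(ρ xβ / h' xβ)) 0 :=
      (hχd.sub_const xβ).const_mul (g 0 xβ)
    have hE : HasDerivAt (fun t => (∫ x in xβ..χ t, g t x) - g 0 xβ * (χ t - xβ)) 0 0 := by
      rw [hasDerivAt_iff_isLittleO]
      have hE0 : (∫ x in xβ..χ 0, g 0 x) - g 0 xβ * (χ 0 - xβ) = 0 := by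
        rw [hχ0]; simp
      rw [Asymptotics.isLittleO_iff]
      intro C hC
      obtain ⟨Cρ, hCρ_def⟩ : ∃ y : ℝ, y = 2 * B / h' xβ := ⟨_, rfl⟩
      have hCρpos : (0:ℝ) < Cρ := by rw [hCρ_def]; positivity
      have hgcA : ContinuousAt (fun p : ℝ × ℝ => g p.1 p.2) (0, xβ) :=
        (hgcont (0, xβ) ⟨Set.mem_univ _, hxβIcc⟩).continuousAt
          (prod_mem_nhds Filter.univ_mem hIccnhds)
      obtain ⟨θ, hθpos, hθ⟩ := Metric.continuousAt_iff.1 hgcA (C / (Cρ + 1)) (by positivity)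
      have hηpos : 0 < min t₀ (min θ (θ / (Cρ + 1))) :=
        lt_min ht₀pos (lt_min hθpos (by positivity))
      filter_upwards [Metric.ball_mem_nhds (0:ℝ) hηpos] with t ht
      rw [Metric.mem_ball, Real.dist_eq, sub_zero] at ht
      have ht₀' : |t| < t₀ := lt_of_lt_of_le ht (min_le_left _ _)
      have hθ1 : |t| < θ := lt_of_lt_of_le ht (le_trans (min_le_right _ _) (min_le_left _ _))
      have hθ2 : |t| < θ / (Cρ + 1) :=
        lt_of_lt_of_le ht (le_trans (min_le_right _ _) (min_le_right _ _))
      obtain ⟨hχI, -, -⟩ := hroot t ht₀'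
      have hbd : |χ t - xβ| ≤ |t| * Cρ := by rw [hCρ_def]; exact hχbound t ht₀'
      have hbdθ : |χ t - xβ| < θ := by
        have h1 : |t| * Cρ < θ / (Cρ + 1) * (Cρ + 1) := by
          have h1a := mul_lt_mul_of_pos_right hθ2 (show (0:ℝ) < Cρ + 1 by linarith)
          have h1b : |t| * Cρ ≤ |t| * (Cρ + 1) := by nlinarith [abs_nonneg t]
          linarith
        have h2 : θ / (Cρ + 1) * (Cρ + 1) = θ := by field_simp
        linarith
      have hsubI : Set.uIcc xβ (χ t) ⊆ Set.Icc 0 M :=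
        Set.uIcc_subset_Icc hxβIcc (hIsub hχI)
      have hint : IntervalIntegrable (fun x => g t x) volume xβ (χ t) :=
        ((hgtcont t).mono hsubI).intervalIntegrable
      have hsplit : (∫ x in xβ..χ t, g t x) - g 0 xβ * (χ t - xβ)
          = ∫ x in xβ..χ t, (g t x - g 0 xβ) := by
        rw [intervalIntegral.integral_sub hint intervalIntegrable_const,
          intervalIntegral.integral_const, smul_eq_mul]
        ring
      have hnorm : ‖∫ x in xβ..χ t, (g t x - g 0 xβ)‖ ≤ C / (Cρ + 1) * |χ t - xβ| := by
        apply intervalIntegral.norm_integral_le_of_norm_le_const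
        intro x hx
        have hxu : x ∈ Set.uIcc xβ (χ t) := Set.uIoc_subset_uIcc hx
        have hd1 : |x - xβ| ≤ |χ t - xβ| := abs_sub_left_of_mem_uIcc hxu
        have hdist : dist (t, x) ((0:ℝ), xβ) < θ := by
          rw [Prod.dist_eq]
          apply max_lt
          · rw [Real.dist_eq, sub_zero]; exact hθ1
          · rw [Real.dist_eq]; exact lt_of_le_of_lt hd1 hbdθ
        have := hθ hdist
        rw [Real.dist_eq] at this
        rw [Real.norm_eq_abs]
        exact this.le
      have hfin : ‖(∫ x in xβ..χ t, g t x) - g 0 xβ * (χ t - xβ)‖ ≤ C * ‖t‖ := by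
        rw [hsplit]
        calc ‖∫ x in xβ..χ t, (g t x - g 0 xβ)‖ ≤ C / (Cρ + 1) * |χ t - xβ| := hnorm
          _ ≤ C / (Cρ + 1) * (|t| * Cρ) :=
              mul_le_mul_of_nonneg_left hbd (by positivity)
          _ ≤ C * ‖t‖ := by
              rw [Real.norm_eq_abs, div_mul_eq_mul_div, div_le_iff₀ (by positivity)]
              nlinarith [mul_nonneg hC.le (abs_nonneg t)]
      simpa [hE0, hχ0] using hfin
    have hcomb : (fun t => ∫ x in xβ..χ t, g t x)
        = fun t => g 0 xβ * (χ t - xβ) + ((∫ x in xβ..χ t, g t x) - g 0 xβ * (χ t - xβ)) := by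
      funext t; ring
    rw [hcomb]
    have := hA.add hE
    rw [add_zero] at this
    exact this
  -- eventual equality
  have hUeq : U =ᶠ[𝓝 0] fun t => (∫ x in xβ..M, g t x) - (∫ x in xβ..χ t, g t x) := by
    filter_upwards [Metric.ball_mem_nhds (0:ℝ) ht₀pos] with t ht
    rw [Metric.mem_ball, Real.dist_eq, sub_zero] at ht
    obtain ⟨hχI, hχeq, hiff⟩ := hroot t ht
    have hχIcc : χ t ∈ Set.Icc 0 M := hIsub hχI
    have hft : ∀ x : ℝ,
        (if 0 < h x + t * ρ x then (x - h x - t * ρ x) * F_Z (h x + t * ρ x) * f₁ x else 0)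
        = if χ t < x then g t x else 0 := by
      intro x
      by_cases hxM : x ∈ Set.Icc 0 M
      · by_cases hpos : 0 < h x + t * ρ x
        · rw [if_pos hpos, if_pos ((hiff x hxM).1 hpos)]
          show _ = (x - h x - t * ρ x) * Fh (h x + t * ρ x) * f₁ x
          rw [show Fh (h x + t * ρ x) = F_Z (h x + t * ρ x) from if_pos hpos.le]
        · rw [if_neg hpos, if_neg (fun hc => hpos ((hiff x hxM).2 hc))]
      · have h0 : f₁ x = 0 := hf₁supp x hxM
        show (if 0 < h x + t * ρ x then (x - h x - t * ρ x) * F_Z (h x + t * ρ x) * f₁ x else 0)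
          = if χ t < x then (x - h x - t * ρ x) * Fh (h x + t * ρ x) * f₁ x else 0
        rw [h0]
        simp
    rw [hU t]
    simp_rw [hft]
    have hgi1 : IntervalIntegrable (fun x => g t x) volume (χ t) xβ :=
      ((hgtcont t).mono (Set.uIcc_subset_Icc hχIcc hxβIcc)).intervalIntegrable
    have hgi2 : IntervalIntegrable (fun x => g t x) volume xβ M :=
      ((hgtcont t).mono (Set.uIcc_subset_Icc hxβIcc ⟨hM.le, le_rfl⟩)).intervalIntegrable
    have hgiχM : IntervalIntegrable (fun x => g t x) volume (χ t) M :=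
      ((hgtcont t).mono (Set.uIcc_subset_Icc hχIcc ⟨hM.le, le_rfl⟩)).intervalIntegrable
    have hint1 : IntervalIntegrable (fun x => if χ t < x then g t x else 0)
        volume 0 (χ t) := by
      rw [intervalIntegrable_iff]
      apply (integrableOn_zero (μ := volume)).congr_fun ?_ measurableSet_uIoc
      intro x hx
      rw [Set.uIoc_of_le hχIcc.1] at hx
      exact (if_neg (not_lt.2 hx.2)).symm
    have hint2 : IntervalIntegrable (fun x => if χ t < x then g t x else 0)
        volume (χ t) M := by
      rw [intervalIntegrable_iff]
      rw [intervalIntegrable_iff] at hgiχM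
      apply hgiχM.congr_fun ?_ measurableSet_uIoc
      intro x hx
      rw [Set.uIoc_of_le hχIcc.2] at hx
      exact (if_pos hx.1).symm
    rw [← intervalIntegral.integral_add_adjacent_intervals hint1 hint2]
    have hz1 : (∫ x in (0:ℝ)..χ t, if χ t < x then g t x else 0) = 0 := by
      rw [intervalIntegral.integral_congr (g := fun _ => (0:ℝ)) ?_,
        intervalIntegral.integral_zero]
      intro x hx
      rw [Set.uIcc_of_le hχIcc.1] at hx
      exact if_neg (not_lt.2 hx.2)
    have hz2 : (∫ x in χ t..M, if χ t < x then g t x else 0) = ∫ x in χ t..M, g t x := by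
      apply intervalIntegral.integral_congr_ae
      filter_upwards with x hx
      rw [Set.uIoc_of_le hχIcc.2] at hx
      exact if_pos hx.1
    rw [hz1, hz2, zero_add,
      ← intervalIntegral.integral_add_adjacent_intervals hgi1 hgi2,
      intervalIntegral.integral_symm xβ (χ t)]
    ring
  have hfinal := (hT1.sub hT2).congr_of_eventuallyEq hUeq
  refine hfinal.congr_deriv ?_
  rw [hg'0, hg0]
  ring
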